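/- Fix θ, q ∈ ℝ with q ≠ 0 and let A: ℝ → ℝ be convex. Then the function g(τ) = τ·A(θ − q) + (1−τ)·A(θ + (τ/(1−τ))q) − A(θ) is monotonically non-decreasing on (0,1). -/

import Mathlib

/-- per-coordinate version of Proposition 3: for convex `A` and
fixed `θ, q` with `q ≠ 0`, the function
`g(τ) = τ * A(θ - q) + (1-τ) * A(θ + (τ/(1-τ)) * q) - A(θ)`
is monotonically non-decreasing on `(0,1)`. -/
theorem shakeout_regularizer_monotone_tau (A : ℝ → ℝ)
    (hA : ConvexOn ℝ Set.univ A) (θ q : ℝ) (hq : q ≠ 0) :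
    MonotoneOn
      (fun τ : ℝ => τ * A (θ - q) + (1 - τ) * A (θ + τ / (1 - τ) * q) - A θ)
      (Set.Ioo (0:ℝ) 1) := by
  intro τ₁ h₁ τ₂ h₂ hle
  obtain ⟨h10, h11⟩ := h₁
  obtain ⟨h20, h21⟩ := h₂
  have h1 : (0:ℝ) < 1 - τ₁ := by linarith
  have h2 : (0:ℝ) < 1 - τ₂ := by linarith
  set x := θ - q with hx
  set y₁ := θ + τ₁ / (1 - τ₁) * q with hy1
  set y₂ := θ + τ₂ / (1 - τ₂) * q with hy2
  set l := (1 - τ₂) / (1 - τ₁) with hl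
  have hl0 : 0 ≤ l := by positivity
  have hl1 : l ≤ 1 := by rw [hl, div_le_one h1]; linarith
  have hy : (1 - l) • x + l • y₂ = y₁ := by
    simp only [smul_eq_mul, hl, hx, hy1, hy2]
    field_simp
    ring
  have hconv := hA.2 (Set.mem_univ x) (Set.mem_univ y₂)
    (by linarith : (0:ℝ) ≤ 1 - l) hl0 (by ring)
  rw [hy] at hconv
  have h1l : (1 - τ₁) * (1 - l) = τ₂ - τ₁ := by
    rw [hl]; field_simp; ring
  have h2l : (1 - τ₁) * l = 1 - τ₂ := by
    rw [hl]; field_simp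
  simp only [smul_eq_mul] at hconv
  have key : (1 - τ₁) * A y₁ ≤ (τ₂ - τ₁) * A x + (1 - τ₂) * A y₂ := by
    have h := mul_le_mul_of_nonneg_left hconv h1.le
    rw [mul_add, ← mul_assoc, ← mul_assoc, h1l, h2l] at h
    exact h
  simp only
  linarith
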